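/- Under unconfoundedness, if D is a binary treatment indicator, Y(1) a potential outcome with (Y(1)) independent of D given X, and π(X) = P(D=1|X) with 0 < π(X) < 1 almost surely, then E[D·Y / π(X)] = E[Y(1)], where Y = D·Y(1) + (1-D)·Y(0). -/

import Mathlib

open MeasureTheory ProbabilityTheory

lemma ipw_aux {Ω : Type*} {m : MeasurableSpace Ω} [mΩ : MeasurableSpace Ω] [StandardBorelSpace Ω]
    (μ : Measure Ω) [IsProbabilityMeasure μ]
    (D Y1 : Ω → ℝ) (hD : Measurable D) (hY1 : Measurable Y1)
    (hDbin : ∀ ω, D ω = 0 ∨ D ω = 1)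
    (hY1int : Integrable Y1 μ)
    (π : Ω → ℝ) (hm : m ≤ mΩ) (hπ : π =ᵐ[μ] μ[D | m])
    (hoverlap : ∀ᵐ ω ∂μ, 0 < π ω)
    (hCI : CondIndepFun m hm Y1 D μ)
    (hint : Integrable (fun ω => D ω * Y1 ω / π ω) μ) :
    ∫ ω, D ω * Y1 ω / π ω ∂μ = ∫ ω, Y1 ω ∂μ := by
  classical
  set κ := condExpKernel μ m with hκ_def
  have hDabs : ∀ ω, |D ω| ≤ 1 := by
    intro ω; rcases hDbin ω with h | h <;> simp [h]
  have hDY1int : Integrable (fun ω => D ω * Y1 ω) μ := by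
    refine hY1int.mono ((hD.mul hY1).aestronglyMeasurable) (ae_of_all _ fun ω => ?_)
    have := hDabs ω
    simp only [Real.norm_eq_abs, abs_mul]
    nlinarith [abs_nonneg (Y1 ω)]
  have hDint : Integrable D μ := by
    refine (integrable_const (1 : ℝ)).mono hD.aestronglyMeasurable (ae_of_all _ fun ω => ?_)
    simpa using hDabs ω
  -- the treatment set
  set A : Set Ω := D ⁻¹' {1} with hA_def
  have hA : MeasurableSet A := hD (measurableSet_singleton 1)
  -- a.e. product formula from conditional independence, for rational Iic sets
  have hae : ∀ᵐ ω ∂μ, ∀ q : ℚ,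
      κ ω (Y1 ⁻¹' Set.Iic (q : ℝ) ∩ A) = κ ω (Y1 ⁻¹' Set.Iic (q : ℝ)) * κ ω A := by
    rw [ae_all_iff]
    intro q
    refine ae_of_ae_trim hm ?_
    exact hCI (Y1 ⁻¹' Set.Iic (q : ℝ)) A ⟨Set.Iic (q : ℝ), measurableSet_Iic, rfl⟩
      ⟨{1}, measurableSet_singleton 1, rfl⟩
  have hY1k : ∀ᵐ ω ∂μ, Integrable Y1 (κ ω) := hY1int.condExpKernel_ae
  have hDk : ∀ᵐ ω ∂μ, Integrable D (κ ω) := hDint.condExpKernel_ae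
  -- the key kernel-level factorization
  have hkey : ∀ᵐ ω ∂μ, ∫ y, D y * Y1 y ∂(κ ω) = (∫ y, D y ∂(κ ω)) * ∫ y, Y1 y ∂(κ ω) := by
    filter_upwards [hae, hY1k, hDk] with ω hq hY1i hDi
    have hps : IsProbabilityMeasure (κ ω) := inferInstance
    set p1 : Set (Set Ω) := {s | ∃ t ∈ ⋃ a : ℚ, {Set.Iic (a : ℝ)}, Y1 ⁻¹' t = s} with hp1_def
    have hgen1 : MeasurableSpace.comap Y1 inferInstance = MeasurableSpace.generateFrom p1 := by
      conv_lhs => rw [show (inferInstance : MeasurableSpace ℝ) = borel ℝ from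
        BorelSpace.measurable_eq, Real.borel_eq_generateFrom_Iic_rat]
      rw [MeasurableSpace.comap_generateFrom]
      rfl
    have hpi1 : IsPiSystem p1 := Real.isPiSystem_Iic_rat.comap Y1
    have hpi2 : IsPiSystem ({A} : Set (Set Ω)) := IsPiSystem.singleton A
    have hle2 : MeasurableSpace.comap D inferInstance ≤ MeasurableSpace.generateFrom {A} := by
      rintro t ⟨s, hs, rfl⟩
      have hAm : MeasurableSet[MeasurableSpace.generateFrom {A}] A :=
        MeasurableSpace.measurableSet_generateFrom rfl
      by_cases h1 : (1 : ℝ) ∈ s <;> by_cases h0 : (0 : ℝ) ∈ s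
      · have : D ⁻¹' s = Set.univ := by
          ext ω; simp only [Set.mem_preimage, Set.mem_univ, iff_true]
          rcases hDbin ω with h | h <;> rw [h] <;> assumption
        rw [this]; exact @MeasurableSet.univ _ (MeasurableSpace.generateFrom {A})
      · have : D ⁻¹' s = A := by
          ext ω; simp only [Set.mem_preimage, hA_def, Set.mem_singleton_iff]
          constructor
          · intro hω; rcases hDbin ω with h | h
            · exact absurd (h ▸ hω) h0
            · exact h
          · intro h; rw [h]; exact h1
        rw [this]; exact hAm
      · have : D ⁻¹' s = Aᶜ := by
          ext ω
          simp only [Set.mem_preimage, Set.mem_compl_iff, hA_def, Set.mem_singleton_iff]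
          constructor
          · intro hω h; exact h1 (h ▸ hω)
          · intro hω; rcases hDbin ω with h | h
            · rw [h]; exact h0
            · exact absurd h hω
        rw [this]; exact hAm.compl
      · have : D ⁻¹' s = ∅ := by
          ext ω; simp only [Set.mem_preimage, Set.mem_empty_iff_false, iff_false]
          intro hω; rcases hDbin ω with h | h
          · exact h0 (h ▸ hω)
          · exact h1 (h ▸ hω)
        rw [this]; exact @MeasurableSet.empty _ (MeasurableSpace.generateFrom {A})
    have hsets : IndepSets p1 {A} (κ ω) := by
      rw [IndepSets_iff]
      rintro t1 t2 ⟨t, ht, rfl⟩ ht2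
      rw [Set.mem_singleton_iff] at ht2
      subst ht2
      simp only [Set.mem_iUnion, Set.mem_singleton_iff] at ht
      obtain ⟨q, rfl⟩ := ht
      exact hq q
    have h1 : Indep (MeasurableSpace.comap Y1 inferInstance)
        (MeasurableSpace.generateFrom {A}) (κ ω) := by
      refine IndepSets.indep hY1.comap_le ?_ hpi1 hpi2 hgen1 rfl hsets
      refine MeasurableSpace.generateFrom_le ?_
      rintro s hs
      rw [Set.mem_singleton_iff] at hs
      subst hs
      exact hA
    have hindep : IndepFun Y1 D (κ ω) := indep_of_indep_of_le_right h1 hle2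
    have hmul := IndepFun.integral_mul_eq_mul_integral hindep hY1i.1 hDi.1
    calc ∫ y, D y * Y1 y ∂(κ ω) = ∫ y, Y1 y * D y ∂(κ ω) := by
          congr 1; ext y; ring
      _ = (∫ y, Y1 y ∂(κ ω)) * ∫ y, D y ∂(κ ω) := hmul
      _ = (∫ y, D y ∂(κ ω)) * ∫ y, Y1 y ∂(κ ω) := by ring
  -- conditional expectation product formula
  have hprod : μ[fun ω => D ω * Y1 ω | m] =ᵐ[μ] fun ω => π ω * (μ[Y1 | m]) ω := by
    have e1 := condExp_ae_eq_integral_condExpKernel hm hDY1int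
    have e2 := condExp_ae_eq_integral_condExpKernel hm hY1int
    have e3 := condExp_ae_eq_integral_condExpKernel hm hDint
    filter_upwards [e1, e2, e3, hkey, hπ] with ω h1 h2 h3 hk hπω
    rw [h1, hk, ← h3, ← h2, ← hπω]
  -- pull-out of 1/π
  set g : Ω → ℝ := fun ω => ((μ[D | m]) ω)⁻¹ with hg_def
  have hgm : StronglyMeasurable[m] g := stronglyMeasurable_condExp.measurable.inv.stronglyMeasurable
  have heq : (fun ω => D ω * Y1 ω / π ω) =ᵐ[μ] fun ω => g ω * (D ω * Y1 ω) := by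
    filter_upwards [hπ] with ω h
    rw [div_eq_mul_inv, mul_comm, hg_def]
    simp only
    rw [← h]
  have hgint : Integrable (fun ω => g ω * (D ω * Y1 ω)) μ := hint.congr heq
  have hpull : μ[fun ω => g ω * (D ω * Y1 ω) | m]
      =ᵐ[μ] fun ω => g ω * (μ[fun ω => D ω * Y1 ω | m]) ω := by
    have := condExp_mul_of_stronglyMeasurable_left (μ := μ) hgm
      (f := g) (g := fun ω => D ω * Y1 ω) hgint hDY1int
    exact this
  have hfinal : μ[fun ω => D ω * Y1 ω / π ω | m] =ᵐ[μ] μ[Y1 | m] := by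
    have h0 := condExp_congr_ae (m := m) (μ := μ) heq
    refine h0.trans (hpull.trans ?_)
    filter_upwards [hprod, hπ, hoverlap] with ω hp hπω hov
    rw [hp, hg_def]
    simp only
    rw [← hπω, ← mul_assoc, inv_mul_cancel₀ (ne_of_gt hov), one_mul]
  calc ∫ ω, D ω * Y1 ω / π ω ∂μ
      = ∫ ω, (μ[fun ω => D ω * Y1 ω / π ω | m]) ω ∂μ := (integral_condExp hm).symm
    _ = ∫ ω, (μ[Y1 | m]) ω ∂μ := integral_congr_ae hfinal
    _ = ∫ ω, Y1 ω ∂μ := integral_condExp hm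

/-- Under unconfoundedness and overlap, `E[D·Y/π(X)] = E[Y(1)]`,
where `Y = D·Y(1) + (1-D)·Y(0)` and `π(X) = E[D|X]`. -/
theorem ipw_identifies_treated_mean
    {Ω 𝒳 : Type*} [MeasurableSpace Ω] [StandardBorelSpace Ω] [MeasurableSpace 𝒳]
    (μ : Measure Ω) [IsProbabilityMeasure μ]
    (D : Ω → ℝ) (X : Ω → 𝒳) (Y0 Y1 : Ω → ℝ)
    (hD : Measurable D) (hX : Measurable X)
    (hY0 : Measurable Y0) (hY1 : Measurable Y1)
    (hDbin : ∀ ω, D ω = 0 ∨ D ω = 1)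
    (hY0int : Integrable Y0 μ) (hY1int : Integrable Y1 μ)
    -- π(X) := E[D | X]
    (π : Ω → ℝ) (hπ : π =ᵐ[μ] μ[D | MeasurableSpace.comap X inferInstance])
    -- overlap
    (hoverlap : ∀ᵐ ω ∂μ, 0 < π ω ∧ π ω < 1)
    -- unconfoundedness: (Y(0), Y(1)) ⫫ D | X
    (hunconf : CondIndepFun (MeasurableSpace.comap X inferInstance) hX.comap_le
      (fun ω => (Y0 ω, Y1 ω)) D μ)
    -- integrability of the weighted term
    (hint : Integrable (fun ω => D ω * Y1 ω / π ω) μ) :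
    ∫ ω, D ω * (D ω * Y1 ω + (1 - D ω) * Y0 ω) / π ω ∂μ = ∫ ω, Y1 ω ∂μ := by
  have hDD : ∀ ω, D ω * (D ω * Y1 ω + (1 - D ω) * Y0 ω) = D ω * Y1 ω := by
    intro ω; rcases hDbin ω with h | h <;> simp [h]
  simp_rw [hDD]
  have hCI : CondIndepFun (MeasurableSpace.comap X inferInstance) hX.comap_le Y1 D μ := by
    have := hunconf.comp (measurable_snd (α := ℝ) (β := ℝ)) measurable_id
    exact this
  exact ipw_aux μ D Y1 hD hY1 hDbin hY1int π hX.comap_le hπ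
    (hoverlap.mono fun ω h => h.1) hCI hint
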